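/- For every nontrivial g in F', the conjugacy class of g in F' is infinite; in particular, F' is an i.c.c. group (every nontrivial conjugacy class is infinite). -/

import Mathlib

open Set
set_option linter.unusedSectionVars false
set_option maxHeartbeats 1000000

noncomputable section

/-- `d` is an `N`-adic rational: of the form `a / N ^ k`. -/
def NAdic (N : ℕ) (d : ℝ) : Prop := ∃ a k : ℕ, d = (a : ℝ) / (N : ℝ) ^ k

/-- Membership in the generalized Thompson group `F(N)`, modeled as permutations of `ℝ`
that are the identity outside `[0,1]`: continuous, strictly increasing, fixing `0` and `1`,
differentiable except at finitely many `N`-adic points of `[0,1]`, with derivatives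
integer powers of `N`. -/
def InFN (N : ℕ) (f : Equiv.Perm ℝ) : Prop :=
  Continuous f ∧ StrictMono f ∧
  (∀ x : ℝ, x ∉ Icc (0:ℝ) 1 → f x = x) ∧
  f 0 = 0 ∧ f 1 = 1 ∧
  ∃ s : Finset ℝ, (∀ x ∈ s, x ∈ Icc (0:ℝ) 1 ∧ NAdic N x) ∧
    ∀ x ∈ Icc (0:ℝ) 1, x ∉ s → ∃ m : ℤ, HasDerivAt (⇑f) ((N : ℝ) ^ m) x

/-- Membership in `F' ⊆ F(N)`: elements that are the identity near both `0` and `1`. -/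
def InF' (N : ℕ) (f : Equiv.Perm ℝ) : Prop :=
  InFN N f ∧ ∃ ε δ : ℝ, 0 < ε ∧ ε < 1 ∧ 0 < δ ∧ δ < 1 ∧
    (∀ x ∈ Icc (0:ℝ) ε, f x = x) ∧ (∀ x ∈ Icc δ (1:ℝ), f x = x)

/-- Membership in `D ⊆ F(N)`: elements that are the identity near `1`. -/
def InD (N : ℕ) (f : Equiv.Perm ℝ) : Prop :=
  InFN N f ∧ ∃ δ : ℝ, 0 < δ ∧ δ < 1 ∧ ∀ x ∈ Icc δ (1:ℝ), f x = x

/-- The piecewise linear map `A_{d,p}`. -/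
def A (N : ℕ) (d : ℝ) (p : ℤ) (x : ℝ) : ℝ :=
  if x ≤ d then x / (N : ℝ) ^ p
  else if x ≤ 1 - d / (N : ℝ) ^ p then x - d + d / (N : ℝ) ^ p
  else (N : ℝ) ^ p * x + 1 - (N : ℝ) ^ p

def Hfun (c ε L P : ℝ) (x : ℝ) : ℝ :=
  if x ≤ c then x
  else if x ≤ c + ε then c + (x - c) / P
  else if x ≤ c + L - ε / P then x - ε + ε / P
  else if x ≤ c + L then c + L - P * (c + L - x)
  else x

section basic
variable {c ε L P : ℝ} (hε : 0 < ε) (hP : 0 < P) (hL : ε + ε / P ≤ L)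

lemma Hfun_eval1 {x : ℝ} (hx : x ≤ c) : Hfun c ε L P x = x := by
  rw [Hfun, if_pos hx]

include hε hP hL

lemma hεP_pos : 0 < ε / P := div_pos hε hP
lemma hL_pos : 0 < L := lt_of_lt_of_le (by positivity) hL

lemma Hfun_eval2 {x : ℝ} (h1 : c < x) (h2 : x ≤ c + ε) :
    Hfun c ε L P x = c + (x - c) / P := by
  rw [Hfun, if_neg (by linarith), if_pos h2]

lemma Hfun_eval3 {x : ℝ} (h1 : c + ε < x) (h2 : x ≤ c + L - ε / P) :
    Hfun c ε L P x = x - ε + ε / P := by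
  rw [Hfun, if_neg (by linarith), if_neg (by linarith), if_pos h2]

lemma Hfun_eval4 {x : ℝ} (h1 : c + L - ε / P < x) (h2 : x ≤ c + L) :
    Hfun c ε L P x = c + L - P * (c + L - x) := by
  have := hεP_pos hε hP hL
  rw [Hfun, if_neg (by linarith), if_neg (by nlinarith), if_neg (by linarith), if_pos h2]

lemma Hfun_eval5 {x : ℝ} (h1 : c + L < x) : Hfun c ε L P x = x := by
  have := hεP_pos hε hP hL
  rw [Hfun, if_neg (by linarith), if_neg (by nlinarith), if_neg (by linarith), if_neg (by linarith)]

lemma Hfun_id_left {x : ℝ} (hx : x ≤ c) : Hfun c ε L P x = x := Hfun_eval1 hx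

lemma Hfun_id_right {x : ℝ} (hx : c + L ≤ x) : Hfun c ε L P x = x := by
  rcases eq_or_lt_of_le hx with h | h
  · rw [Hfun_eval4 hε hP hL (by have := hεP_pos hε hP hL; linarith) h.ge, ← h]; ring
  · exact Hfun_eval5 hε hP hL h
lemma Hfun_ub2 {z : ℝ} (h : z ≤ c + ε) : Hfun c ε L P z ≤ c + ε / P := by
  have hQ : 0 < ε / P := div_pos hε hP
  rcases le_or_gt z c with h1 | h1
  · rw [Hfun_eval1 h1]; linarith
  · rw [Hfun_eval2 hε hP hL h1 h]
    have : (z - c) / P ≤ ε / P := by gcongr; linarith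
    linarith

lemma Hfun_ub3 {z : ℝ} (h : z ≤ c + L - ε / P) : Hfun c ε L P z ≤ c + L - ε := by
  have hQ : 0 < ε / P := div_pos hε hP
  rcases le_or_gt z (c + ε) with h1 | h1
  · have := Hfun_ub2 hε hP hL h1; linarith
  · rw [Hfun_eval3 hε hP hL h1 h]; linarith

lemma Hfun_ub4 {z : ℝ} (h : z ≤ c + L) : Hfun c ε L P z ≤ c + L := by
  have hQ : 0 < ε / P := div_pos hε hP
  rcases le_or_gt z (c + L - ε / P) with h1 | h1
  · have := Hfun_ub3 hε hP hL h1; linarith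
  · rw [Hfun_eval4 hε hP hL h1 h]
    nlinarith [mul_nonneg hP.le (show (0:ℝ) ≤ c + L - z by linarith)]

lemma Hfun_lb2 {z : ℝ} (h : c < z) : c < Hfun c ε L P z := by
  have hQ : 0 < ε / P := div_pos hε hP
  rcases le_or_gt z (c + ε) with h1 | h1
  · rw [Hfun_eval2 hε hP hL h h1]
    have : 0 < (z - c) / P := div_pos (by linarith) hP
    linarith
  · rcases le_or_gt z (c + L - ε / P) with h2 | h2
    · rw [Hfun_eval3 hε hP hL h1 h2]; linarith
    · rcases le_or_gt z (c + L) with h3 | h3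
      · rw [Hfun_eval4 hε hP hL h2 h3]
        have : P * (c + L - z) < P * (ε / P) := by
          apply mul_lt_mul_of_pos_left _ hP; linarith
        rw [mul_div_cancel₀ _ (ne_of_gt hP)] at this
        linarith
      · rw [Hfun_eval5 hε hP hL h3]; linarith

lemma Hfun_lb3 {z : ℝ} (h : c + ε < z) : c + ε / P < Hfun c ε L P z := by
  have hQ : 0 < ε / P := div_pos hε hP
  rcases le_or_gt z (c + L - ε / P) with h2 | h2
  · rw [Hfun_eval3 hε hP hL h h2]; linarith
  · rcases le_or_gt z (c + L) with h3 | h3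
    · rw [Hfun_eval4 hε hP hL h2 h3]
      have : P * (c + L - z) < P * (ε / P) := by
        apply mul_lt_mul_of_pos_left _ hP; linarith
      rw [mul_div_cancel₀ _ (ne_of_gt hP)] at this
      linarith
    · rw [Hfun_eval5 hε hP hL h3]; linarith

lemma Hfun_lb4 {z : ℝ} (h : c + L - ε / P < z) : c + L - ε < Hfun c ε L P z := by
  have hQ : 0 < ε / P := div_pos hε hP
  rcases le_or_gt z (c + L) with h3 | h3
  · rw [Hfun_eval4 hε hP hL h h3]
    have : P * (c + L - z) < P * (ε / P) := by
      apply mul_lt_mul_of_pos_left _ hP; linarith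
    rw [mul_div_cancel₀ _ (ne_of_gt hP)] at this
    linarith
  · rw [Hfun_eval5 hε hP hL h3]; linarith

lemma Hfun_lb5 {z : ℝ} (h : c + L < z) : c + L < Hfun c ε L P z := by
  rw [Hfun_eval5 hε hP hL h]; exact h

lemma Hfun_mono : StrictMono (Hfun c ε L P) := by
  have hQ : 0 < ε / P := div_pos hε hP
  intro x y hxy
  rcases le_or_gt y c with hy1 | hy1
  · rw [Hfun_eval1 hy1, Hfun_eval1 (by linarith : x ≤ c)]; exact hxy
  rcases le_or_gt y (c + ε) with hy2 | hy2
  · rcases le_or_gt x c with hx | hx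
    · rw [Hfun_eval1 hx]
      calc x ≤ c := hx
        _ < _ := Hfun_lb2 hε hP hL hy1
    · rw [Hfun_eval2 hε hP hL hx (by linarith), Hfun_eval2 hε hP hL hy1 hy2]
      have : (x - c) / P < (y - c) / P := by gcongr <;> linarith
      linarith
  rcases le_or_gt y (c + L - ε / P) with hy3 | hy3
  · rcases le_or_gt x (c + ε) with hx | hx
    · calc Hfun c ε L P x ≤ c + ε / P := Hfun_ub2 hε hP hL hx
        _ < _ := Hfun_lb3 hε hP hL hy2
    · rw [Hfun_eval3 hε hP hL hx (by linarith), Hfun_eval3 hε hP hL hy2 hy3]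
      linarith
  rcases le_or_gt y (c + L) with hy4 | hy4
  · rcases le_or_gt x (c + L - ε / P) with hx | hx
    · calc Hfun c ε L P x ≤ c + L - ε := Hfun_ub3 hε hP hL hx
        _ < _ := Hfun_lb4 hε hP hL hy3
    · rw [Hfun_eval4 hε hP hL hx (by linarith), Hfun_eval4 hε hP hL hy3 hy4]
      have : P * (c + L - y) < P * (c + L - x) := by
        apply mul_lt_mul_of_pos_left _ hP; linarith
      linarith
  · rcases le_or_gt x (c + L) with hx | hx
    · calc Hfun c ε L P x ≤ c + L := Hfun_ub4 hε hP hL hx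
        _ < _ := Hfun_lb5 hε hP hL hy4
    · rw [Hfun_eval5 hε hP hL hx, Hfun_eval5 hε hP hL hy4]; exact hxy


lemma Hfun_leftInv (x : ℝ) :
    Hfun c (ε / P) L P⁻¹ (Hfun c ε L P x) = x := by
  have hQ : 0 < ε / P := div_pos hε hP
  have hPi : 0 < P⁻¹ := inv_pos.mpr hP
  have hPne : P ≠ 0 := ne_of_gt hP
  have key : (ε / P) / P⁻¹ = ε := by field_simp
  have hL' : ε / P + (ε / P) / P⁻¹ ≤ L := by rw [key]; linarith
  rcases le_or_gt x c with h1 | h1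
  · rw [Hfun_eval1 h1, Hfun_eval1 h1]
  rcases le_or_gt x (c + ε) with h2 | h2
  · rw [Hfun_eval2 hε hP hL h1 h2]
    have hz1 : c < c + (x - c) / P := by
      have : 0 < (x - c) / P := div_pos (by linarith) hP
      linarith
    have hz2 : c + (x - c) / P ≤ c + ε / P := by
      have : (x - c) / P ≤ ε / P := by gcongr; linarith
      linarith
    rw [Hfun_eval2 hQ hPi hL' hz1 hz2]
    field_simp
    ring
  rcases le_or_gt x (c + L - ε / P) with h3 | h3
  · rw [Hfun_eval3 hε hP hL h2 h3]
    have hz1 : c + ε / P < x - ε + ε / P := by linarith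
    have hz2 : x - ε + ε / P ≤ c + L - (ε / P) / P⁻¹ := by rw [key]; linarith
    rw [Hfun_eval3 hQ hPi hL' hz1 hz2, key]
    ring
  rcases le_or_gt x (c + L) with h4 | h4
  · rw [Hfun_eval4 hε hP hL h3 h4]
    have hm : P * (c + L - x) < P * (ε / P) := by
      apply mul_lt_mul_of_pos_left _ hP; linarith
    rw [mul_div_cancel₀ _ hPne] at hm
    have hm0 : 0 ≤ P * (c + L - x) := mul_nonneg hP.le (by linarith)
    have hz1 : c + L - (ε / P) / P⁻¹ < c + L - P * (c + L - x) := by rw [key]; linarith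
    have hz2 : c + L - P * (c + L - x) ≤ c + L := by linarith
    rw [Hfun_eval4 hQ hPi hL' hz1 hz2]
    field_simp
    ring
  · rw [Hfun_eval5 hε hP hL h4, Hfun_eval5 hQ hPi hL' h4]

lemma Hfun_cont : Continuous (Hfun c ε L P) := by
  have hQ : 0 < ε / P := div_pos hε hP
  have hPne : P ≠ 0 := ne_of_gt hP
  unfold Hfun
  refine Continuous.if_le continuous_id ?_ continuous_id continuous_const ?_
  · refine Continuous.if_le (by fun_prop) ?_ continuous_id continuous_const ?_
    · refine Continuous.if_le (by fun_prop) ?_ continuous_id continuous_const ?_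
      · exact Continuous.if_le (by fun_prop) continuous_id continuous_id continuous_const
          (fun x hx => by rw [hx]; ring)
      · intro x hx
        rw [hx, if_pos (by linarith : c + L - ε / P ≤ c + L)]
        field_simp
        ring
    · intro x hx
      rw [hx, if_pos (by linarith : c + ε ≤ c + L - ε / P)]
      field_simp
      ring
  · intro x hx
    rw [hx, if_pos (by linarith : c ≤ c + ε)]
    simp

lemma Hfun_deriv {x : ℝ} (hx : x ∉ ({c, c + ε, c + L - ε / P, c + L} : Set ℝ)) :
    HasDerivAt (Hfun c ε L P) 1 x ∨ HasDerivAt (Hfun c ε L P) P⁻¹ x ∨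
      HasDerivAt (Hfun c ε L P) P x := by
  have hQ : 0 < ε / P := div_pos hε hP
  simp only [mem_insert_iff, mem_singleton_iff, not_or] at hx
  obtain ⟨n1, n2, n3, n4⟩ := hx
  rcases lt_or_gt_of_ne n1 with h1 | h1
  · left
    apply (hasDerivAt_id x).congr_of_eventuallyEq
    filter_upwards [Iio_mem_nhds h1] with y hy
    exact Hfun_eval1 (le_of_lt hy)
  rcases lt_trichotomy x (c + ε) with h2 | h2 | h2
  · right; left
    have : HasDerivAt (fun y => c + (y - c) / P) P⁻¹ x := by
      simpa [div_eq_mul_inv] using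
        ((((hasDerivAt_id x).sub_const c).div_const P).const_add c)
    apply this.congr_of_eventuallyEq
    filter_upwards [Ioo_mem_nhds h1 h2] with y hy
    exact Hfun_eval2 hε hP hL hy.1 hy.2.le
  · exact absurd h2 n2
  rcases lt_trichotomy x (c + L - ε / P) with h3 | h3 | h3
  · left
    have : HasDerivAt (fun y => y - ε + ε / P) 1 x := by
      simpa using (((hasDerivAt_id x).sub_const ε).add_const (ε / P))
    apply this.congr_of_eventuallyEq
    filter_upwards [Ioo_mem_nhds h2 h3] with y hy
    exact Hfun_eval3 hε hP hL hy.1 hy.2.le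
  · exact absurd h3 n3
  rcases lt_trichotomy x (c + L) with h4 | h4 | h4
  · right; right
    have : HasDerivAt (fun y => c + L - P * (c + L - y)) P x := by
      have h0 : HasDerivAt (fun y : ℝ => c + L - y) (-1) x := by
        simpa using ((hasDerivAt_id x).const_sub (c + L))
      have h1 : HasDerivAt (fun y : ℝ => P * (c + L - y)) (P * (-1)) x := h0.const_mul P
      simpa using h1.const_sub (c + L)
    apply this.congr_of_eventuallyEq
    filter_upwards [Ioo_mem_nhds h3 h4] with y hy
    exact Hfun_eval4 hε hP hL hy.1 hy.2.le
  · exact absurd h4 n4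
  · left
    apply (hasDerivAt_id x).congr_of_eventuallyEq
    filter_upwards [Ioi_mem_nhds h4] with y hy
    exact Hfun_eval5 hε hP hL hy

end basic

def Hperm (c ε L P : ℝ) (hε : 0 < ε) (hP : 0 < P) (hL : ε + ε / P ≤ L) : Equiv.Perm ℝ where
  toFun := Hfun c ε L P
  invFun := Hfun c (ε / P) L P⁻¹
  left_inv := Hfun_leftInv hε hP hL
  right_inv := fun z => by
    have key : (ε / P) / P⁻¹ = ε := by field_simp
    have h3 : (ε / P) + (ε / P) / P⁻¹ ≤ L := by rw [key]; linarith
    have h := Hfun_leftInv (c := c) (div_pos hε hP) (inv_pos.mpr hP) h3 z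
    rwa [key, inv_inv] at h

lemma Hperm_apply (c ε L P : ℝ) (hε : 0 < ε) (hP : 0 < P) (hL : ε + ε / P ≤ L) :
    ⇑(Hperm c ε L P hε hP hL) = Hfun c ε L P := rfl

lemma Hperm_symm_apply (c ε L P : ℝ) (hε : 0 < ε) (hP : 0 < P) (hL : ε + ε / P ≤ L) :
    ⇑(Hperm c ε L P hε hP hL)⁻¹ = Hfun c (ε / P) L P⁻¹ := rfl


lemma key_lemma (N : ℕ) (hN : 2 ≤ N) (g : Equiv.Perm ℝ) (a : ℝ) (ha : 0 < a)
    (hlt : a < g a) (hlt1 : g a < 1) :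
    {k : Equiv.Perm ℝ | ∃ h : Equiv.Perm ℝ, InF' N h ∧ k = h * g * h⁻¹}.Infinite := by
  classical
  set u := g a with hu
  have hN1 : (1:ℝ) < N := by
    have : (2:ℝ) ≤ N := by exact_mod_cast hN
    linarith
  have hN0 : (0:ℝ) < N := by linarith
  obtain ⟨K, hK⟩ := pow_unbounded_of_one_lt (max ((N:ℝ)/(1-u)) (1/(u-a))) hN1
  have hNK : (0:ℝ) < (N:ℝ)^K := by positivity
  set ε : ℝ := ((N:ℝ)^K)⁻¹ with hεdef
  have hεpos : 0 < ε := by positivity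
  have hεNK : ε * (N:ℝ)^K = 1 := inv_mul_cancel₀ (ne_of_gt hNK)
  have hK1 : (N:ℝ)/(1-u) < (N:ℝ)^K := lt_of_le_of_lt (le_max_left _ _) hK
  have hK2 : 1/(u-a) < (N:ℝ)^K := lt_of_le_of_lt (le_max_right _ _) hK
  have hua : 0 < u - a := by linarith
  have h1u : 0 < 1 - u := by linarith
  have hLu : (N:ℝ)*ε < 1 - u := by
    rw [div_lt_iff₀ h1u] at hK1
    have h' := mul_lt_mul_of_pos_left hK1 hεpos
    have e1 : ε * ((N:ℝ)^K * (1-u)) = 1 - u := by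
      rw [← mul_assoc, hεNK, one_mul]
    nlinarith
  have hεua : ε < u - a := by
    rw [div_lt_iff₀ hua] at hK2
    have h' := mul_lt_mul_of_pos_left hK2 hεpos
    have e1 : ε * ((N:ℝ)^K * (u-a)) = u - a := by
      rw [← mul_assoc, hεNK, one_mul]
    nlinarith
  -- the N-adic point c just below u
  have hupos : 0 < u := by linarith
  have hxpos : 0 < u * (N:ℝ)^K := by positivity
  have hceil : (1:ℤ) ≤ ⌈u * (N:ℝ)^K⌉ := Int.ceil_pos.mpr hxpos
  set m : ℕ := (⌈u * (N:ℝ)^K⌉ - 1).toNat with hmdef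
  have hmcast : (m:ℝ) = (⌈u * (N:ℝ)^K⌉ : ℝ) - 1 := by
    have h0 : ((⌈u * (N:ℝ)^K⌉ - 1).toNat : ℤ) = ⌈u * (N:ℝ)^K⌉ - 1 :=
      Int.toNat_of_nonneg (by omega)
    rw [hmdef]
    exact_mod_cast congrArg (fun z : ℤ => (z:ℝ)) h0
  set c : ℝ := (m:ℝ) * ε with hcdef
  have hcu : c < u := by
    have h1 : (m:ℝ) < u * (N:ℝ)^K := by
      rw [hmcast]
      have := Int.ceil_lt_add_one (u * (N:ℝ)^K)
      linarith
    have h' := mul_lt_mul_of_pos_right h1 hεpos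
    have e1 : u * (N:ℝ)^K * ε = u := by
      rw [mul_assoc, mul_comm ((N:ℝ)^K) ε, hεNK, mul_one]
    rw [hcdef]; nlinarith
  have huc : u ≤ c + ε := by
    have h1 : u * (N:ℝ)^K ≤ (m:ℝ) + 1 := by
      rw [hmcast]
      have := Int.le_ceil (u * (N:ℝ)^K)
      linarith
    have h' := mul_le_mul_of_nonneg_right h1 hεpos.le
    have e1 : u * (N:ℝ)^K * ε = u := by
      rw [mul_assoc, mul_comm ((N:ℝ)^K) ε, hεNK, mul_one]
    rw [hcdef]; nlinarith
  have hac : a < c := by linarith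
  have hcpos : 0 < c := by linarith
  set L : ℝ := (N:ℝ) * ε with hLdef
  have hεL : ε < L := by nlinarith
  have hcL1 : c + L < 1 := by linarith
  -- the family of conjugators
  have hPpos : ∀ n : ℕ, (0:ℝ) < (N:ℝ)^(n+1) := fun n => by positivity
  have hPone : ∀ n : ℕ, (1:ℝ) ≤ (N:ℝ)^(n+1) := fun n => one_le_pow₀ hN1.le
  have hLcond : ∀ n : ℕ, ε + ε / (N:ℝ)^(n+1) ≤ L := by
    intro n
    have h1 : ε / (N:ℝ)^(n+1) ≤ ε := div_le_self hεpos.le (hPone n)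
    have h2 : (2:ℝ) * ε ≤ (N:ℝ) * ε := by
      have : (2:ℝ) ≤ N := by exact_mod_cast hN
      nlinarith
    rw [hLdef]; linarith
  set h : ℕ → Equiv.Perm ℝ :=
    fun n => Hperm c ε L ((N:ℝ)^(n+1)) hεpos (hPpos n) (hLcond n) with hhdef
  -- each h n is in F'
  have hInF' : ∀ n : ℕ, InF' N (h n) := by
    intro n
    have hP := hPpos n
    have hLc := hLcond n
    have happ : ⇑(h n) = Hfun c ε L ((N:ℝ)^(n+1)) := rfl
    have hQ : 0 < ε / (N:ℝ)^(n+1) := div_pos hεpos hP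
    refine ⟨⟨?_, ?_, ?_, ?_, ?_, ?_⟩, c, c + L, hcpos, by linarith, by positivity, hcL1, ?_, ?_⟩
    · rw [happ]; exact Hfun_cont hεpos hP hLc
    · rw [happ]; exact Hfun_mono hεpos hP hLc
    · intro x hx
      rw [happ]
      simp only [mem_Icc, not_and_or, not_le] at hx
      rcases hx with hx | hx
      · exact Hfun_eval1 (by linarith)
      · exact Hfun_id_right hεpos hP hLc (by linarith)
    · rw [happ]; exact Hfun_eval1 (by linarith)
    · rw [happ]; exact Hfun_id_right hεpos hP hLc (by linarith)
    · refine ⟨{c, c + ε, c + L - ε / (N:ℝ)^(n+1), c + L}, ?_, ?_⟩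
      · intro x hx
        have hNne : (N:ℝ) ≠ 0 := ne_of_gt hN0
        have hN1le : (1:ℕ) ≤ (m + N) * N^(n+1) := by
          have : 1 ≤ N := by omega
          have : 1 ≤ N^(n+1) := Nat.one_le_pow _ _ (by omega)
          nlinarith
        have hLpos : 0 < L := by linarith
        have hqq : ε / (N:ℝ)^(n+1) ≤ ε := div_le_self hεpos.le (hPone n)
        simp only [Finset.mem_insert, Finset.mem_singleton] at hx
        rcases hx with rfl | rfl | rfl | rfl
        · exact ⟨⟨by linarith, by linarith⟩, ⟨m, K, by rw [hcdef, hεdef, div_eq_mul_inv]⟩⟩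
        · exact ⟨⟨by linarith, by linarith⟩,
            ⟨m + 1, K, by rw [hcdef, hεdef]; push_cast; try field_simp⟩⟩
        · refine ⟨⟨by linarith, by linarith⟩, (m + N) * N^(n+1) - 1, K + n + 1, ?_⟩
          rw [hcdef, hLdef, hεdef]
          push_cast [Nat.cast_sub hN1le]
          field_simp
          ring
        · exact ⟨⟨by linarith, by linarith⟩,
            ⟨m + N, K, by rw [hcdef, hLdef, hεdef]; push_cast; (try field_simp); try ring⟩⟩
      · intro x _ hxs
        have hxs' : x ∉ ({c, c + ε, c + L - ε / (N:ℝ)^(n+1), c + L} : Set ℝ) := by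
          simpa using hxs
        rw [happ]
        rcases Hfun_deriv hεpos hP hLc hxs' with hd | hd | hd
        · exact ⟨0, by rw [zpow_zero]; exact hd⟩
        · refine ⟨-((n:ℤ)+1), ?_⟩
          have e : (N:ℝ)^(-((n:ℤ)+1)) = ((N:ℝ)^((n+1:ℕ)))⁻¹ := by
            rw [← zpow_natCast (N:ℝ) (n+1), ← zpow_neg]
            congr 1 <;> (push_cast; ring)
          rw [e]; exact hd
        · refine ⟨(n:ℤ)+1, ?_⟩
          have e : (N:ℝ)^((n:ℤ)+1) = (N:ℝ)^((n+1:ℕ)) := by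
            rw [← zpow_natCast (N:ℝ) (n+1)]
            congr 1 <;> (push_cast; ring)
          rw [e]; exact hd
    · intro x hx
      rw [happ]
      exact Hfun_eval1 hx.2
    · intro x hx
      rw [happ]
      exact Hfun_id_right hεpos hP hLc hx.1
  -- values of the conjugates at a
  have hval : ∀ n : ℕ, (h n * g * (h n)⁻¹) a = c + (u - c) / (N:ℝ)^(n+1) := by
    intro n
    have hsymm : (h n)⁻¹ a = a := by
      have : Hfun c (ε / (N:ℝ)^(n+1)) L ((N:ℝ)^(n+1))⁻¹ a = a := Hfun_eval1 (le_of_lt hac)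
      exact this
    rw [Equiv.Perm.mul_apply, Equiv.Perm.mul_apply, hsymm, ← hu]
    exact Hfun_eval2 hεpos (hPpos n) (hLcond n) hcu huc
  -- the conjugates are pairwise distinct
  have hinj : Function.Injective (fun n : ℕ => h n * g * (h n)⁻¹) := by
    intro n1 n2 he
    have he' : h n1 * g * (h n1)⁻¹ = h n2 * g * (h n2)⁻¹ := he
    have h1 := hval n1
    have h2 := hval n2
    rw [he'] at h1
    rw [h1] at h2
    have huc' : u - c ≠ 0 := ne_of_gt (by linarith)
    have hP1 := hPpos n1
    have hP2 := hPpos n2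
    have heq : (N:ℝ)^(n1+1) = (N:ℝ)^(n2+1) := by
      have h3 : (u - c) / (N:ℝ)^(n1+1) = (u - c) / (N:ℝ)^(n2+1) := by linarith
      rw [div_eq_div_iff (ne_of_gt hP1) (ne_of_gt hP2)] at h3
      have h4 : (u - c) * ((N:ℝ)^(n2+1)) = (u - c) * ((N:ℝ)^(n1+1)) := by linarith
      exact (mul_left_cancel₀ huc' h4).symm
    by_contra hne
    rcases Nat.lt_or_ge n1 n2 with hlt' | hge
    · have := pow_lt_pow_right₀ hN1 (by omega : n1+1 < n2+1)
      linarith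
    · have hgt : n2 < n1 := by omega
      have := pow_lt_pow_right₀ hN1 (by omega : n2+1 < n1+1)
      linarith
  exact Set.infinite_of_injective_forall_mem hinj
    (fun n => ⟨h n, hInF' n, rfl⟩)

/-- `F'` is i.c.c.: every nontrivial `g ∈ F'` has an infinite conjugacy class
in `F'`. -/
theorem stmt7 (N : ℕ) (hN : 2 ≤ N) (g : Equiv.Perm ℝ) (hg : InF' N g) (hne : g ≠ 1) :
    {k : Equiv.Perm ℝ | ∃ h : Equiv.Perm ℝ, InF' N h ∧ k = h * g * h⁻¹}.Infinite := by
  obtain ⟨⟨hc, hmono, hout, hg0, hg1, _⟩, _⟩ := hg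
  obtain ⟨x, hx⟩ : ∃ x, g x ≠ x := by
    by_contra hcon
    push_neg at hcon
    exact hne (Equiv.ext fun y => by rw [hcon y, Equiv.Perm.one_apply])
  have hx0 : 0 < x := by
    rcases lt_trichotomy x 0 with h | h | h
    · exact absurd (hout x (by simp only [mem_Icc, not_and_or, not_le]; left; exact h)) hx
    · exact absurd (h ▸ hg0) (h ▸ hx)
    · exact h
  have hx1 : x < 1 := by
    rcases lt_trichotomy x 1 with h | h | h
    · exact h
    · exact absurd (h ▸ hg1) (h ▸ hx)
    · exact absurd (hout x (by simp only [mem_Icc, not_and_or, not_le]; right; exact h)) hx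
  rcases lt_or_gt_of_ne hx with hlt | hgt
  · have hgx0 : 0 < g x := by
      have := hmono hx0
      rwa [hg0] at this
    have hinv : g⁻¹ (g x) = x := by simp
    have T := key_lemma N hN g⁻¹ (g x) hgx0 (by rw [hinv]; exact hlt)
      (by rw [hinv]; exact hx1)
    have hsub : {k : Equiv.Perm ℝ | ∃ h, InF' N h ∧ k = h * g⁻¹ * h⁻¹} ⊆
        (fun k : Equiv.Perm ℝ => k⁻¹) '' {k : Equiv.Perm ℝ | ∃ h, InF' N h ∧ k = h * g * h⁻¹} := by
      rintro k ⟨h, hh, rfl⟩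
      exact ⟨h * g * h⁻¹, ⟨h, hh, rfl⟩, by group⟩
    exact Set.Infinite.of_image _ (T.mono hsub)
  · exact key_lemma N hN g x hx0 hgt (by have := hmono hx1; rwa [hg1] at this)
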